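/- Let X be a compact metric space and T : X → X continuous. Then T is topologically mixing if and only if for every nonempty open set U ⊆ X, the sequence of closures of Tⁿ(U) converges to X in the Hausdorff metric. -/

import Mathlib

open Set Metric Filter Topology

def TopMixing {Z : Type*} [TopologicalSpace Z] (T : Z → Z) : Prop :=
  ∀ U V : Set Z, IsOpen U → IsOpen V → U.Nonempty → V.Nonempty →
    ∃ n₀ : ℕ, ∀ n ≥ n₀, (T^[n] '' U ∩ V).Nonempty

/-- `T` is topologically mixing iff for every nonempty open `U` the closures of the
iterated images `Tⁿ(U)` converge to `X` in the Hausdorff metric. -/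
theorem mixing_iff_hausdorff_convergence {X : Type*} [MetricSpace X] [CompactSpace X]
    (T : X → X) (hT : Continuous T) :
    TopMixing T ↔ ∀ U : Set X, IsOpen U → U.Nonempty →
      Tendsto (fun n : ℕ => hausdorffDist (closure (T^[n] '' U)) (univ : Set X))
        atTop (𝓝 0) := by
  constructor
  · intro hmix U hU hUne
    rw [Metric.tendsto_atTop]
    intro ε hε
    have hε4 : (0:ℝ) < ε/4 := by linarith
    -- cover X by finitely many ε/4-balls
    obtain ⟨t, ht⟩ := isCompact_univ.elim_finite_subcover (fun x : X => ball x (ε/4))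
      (fun x => isOpen_ball) (fun x _ => mem_iUnion.mpr ⟨x, mem_ball_self hε4⟩)
    choose nf hnf using fun x : X =>
      hmix U (ball x (ε/4)) hU isOpen_ball hUne (nonempty_ball.mpr hε4)
    refine ⟨t.sup nf, fun n hn => ?_⟩
    have key : ∀ y : X, ∃ z ∈ closure (T^[n] '' U), dist y z ≤ ε/2 := by
      intro y
      obtain ⟨x, hxt, hyx⟩ := mem_iUnion₂.mp (ht (mem_univ y))
      obtain ⟨z, hzU, hzb⟩ := hnf x n (le_trans (Finset.le_sup hxt) hn)
      exact ⟨z, subset_closure hzU, by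
        have := dist_triangle y x z
        rw [mem_ball] at hyx hzb
        rw [dist_comm z x] at hzb
        linarith⟩
    have hle : hausdorffDist (closure (T^[n] '' U)) (univ : Set X) ≤ ε/2 := by
      apply hausdorffDist_le_of_mem_dist (by positivity)
      · exact fun z _ => ⟨z, mem_univ z, by simp; linarith⟩
      · exact fun y _ => key y
    rw [Real.dist_eq, sub_zero, abs_of_nonneg hausdorffDist_nonneg]
    linarith
  · intro hconv U V hU hV hUne hVne
    obtain ⟨v, hv⟩ := hVne
    obtain ⟨r, hr, hball⟩ := Metric.isOpen_iff.mp hV v hv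
    have := Metric.tendsto_atTop.mp (hconv U hU hUne) (r/2) (by linarith)
    obtain ⟨N, hN⟩ := this
    refine ⟨N, fun n hn => ?_⟩
    have hSne : (T^[n] '' U).Nonempty := hUne.image _
    have hne : EMetric.hausdorffEdist (closure (T^[n] '' U)) (univ : Set X) ≠ ⊤ :=
      hausdorffEdist_ne_top_of_nonempty_of_bounded hSne.closure ⟨v, mem_univ v⟩
        (isCompact_univ.isBounded.subset (subset_univ _)) (isCompact_univ.isBounded)
    have hlt : hausdorffDist (closure (T^[n] '' U)) (univ : Set X) < r/2 := by
      have := hN n hn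
      rwa [Real.dist_eq, sub_zero, abs_of_nonneg hausdorffDist_nonneg] at this
    have h1 : infDist v (closure (T^[n] '' U)) < r/2 := by
      calc infDist v (closure (T^[n] '' U))
          ≤ hausdorffDist (univ : Set X) (closure (T^[n] '' U)) :=
            infDist_le_hausdorffDist_of_mem (mem_univ v)
              (by rw [EMetric.hausdorffEdist_comm]; exact hne)
        _ = hausdorffDist (closure (T^[n] '' U)) (univ : Set X) := hausdorffDist_comm
        _ < r/2 := hlt
    rw [Metric.infDist_closure] at h1
    have hbd : infDist v (T^[n] '' U) < r := lt_of_lt_of_le h1 (by linarith)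
    obtain ⟨z, hzS, hzd⟩ := (Metric.infDist_lt_iff hSne).mp hbd
    exact ⟨z, hzS, hball (by rwa [mem_ball, dist_comm])⟩
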